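/- For every n there exists a (1,1)-BAPO solving the Equality problem, i.e., a BAPO with prefix bandwidth 1 bit and attention bandwidth 1 token that correctly decides whether the two n-bit strings are equal for every prefix–suffix split. -/

import Mathlib

open Finset Filter Asymptotics

/-- An `(a, b)`-BAPO (bounded attention prefix oracle): a prefix oracle `f` outputting
`a` bits, a binary attention function `g`, and a suffix oracle `h` that receives the
prefix-oracle output, an attended set of at most `b` (token, 1-based index) pairs from
the prefix, the suffix, and the split index. -/
structure BAPO (Sigma : Type) (Out : Type) (a b : ℕ) where
  f : List Sigma → (Fin a → Bool)
  g : List Sigma → ℕ → Sigma → ℕ → Bool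
  h : (Fin a → Bool) → Finset (Sigma × ℕ) → List Sigma → ℕ → Out

namespace BAPO

variable {Sigma Out : Type} {a b : ℕ}

/-- The set `𝔾 = {(xᵢ, i) : 1 ≤ i ≤ k, g(suffix, k, xᵢ, i) = 1}` of attended
candidates for a given prefix and suffix. -/
noncomputable def cands (M : BAPO Sigma Out a b) (pre suf : List Sigma) :
    Finset (Sigma × ℕ) :=
  letI := Classical.decEq Sigma
  (Finset.univ.filter fun i : Fin pre.length =>
      M.g suf pre.length (pre.get i) ((i : ℕ) + 1) = true).image
    fun i => (pre.get i, (i : ℕ) + 1)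

/-- The BAPO outputs `y` on input `x`: for every split index `k < |x|` and every
attended set `G ⊆ 𝔾` with `|G| = min b |𝔾|`, the suffix oracle outputs `y`. -/
def SolvesOn (M : BAPO Sigma Out a b) (x : List Sigma) (y : Out) : Prop :=
  ∀ k, k < x.length →
    ∀ G : Finset (Sigma × ℕ), G ⊆ M.cands (x.take k) (x.drop k) →
      G.card = min b (M.cands (x.take k) (x.drop k)).card →
      M.h (M.f (x.take k)) G (x.drop k) k = y

/-- The BAPO outputs a *correct* answer (one satisfying `good`) on input `x`:
for every split index `k < |x|` and every attended set `G ⊆ 𝔾` with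
`|G| = min b |𝔾|`, the suffix oracle's output satisfies `good`. -/
def SolvesOnP (M : BAPO Sigma Out a b) (x : List Sigma) (good : Out → Prop) : Prop :=
  ∀ k, k < x.length →
    ∀ G : Finset (Sigma × ℕ), G ⊆ M.cands (x.take k) (x.drop k) →
      G.card = min b (M.cands (x.take k) (x.drop k)).card →
      good (M.h (M.f (x.take k)) G (x.drop k) k)

end BAPO

namespace EqBAPO

/-- Prefix oracle: 1 bit saying whether the part of `y` seen in the prefix agrees
with the corresponding initial part of `x`. -/
def Mf (pre : List (Option Bool)) : Fin 1 → Bool := fun _ =>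
  decide (pre.drop ((pre.takeWhile Option.isSome).length + 1) <+:
    pre.take (pre.takeWhile Option.isSome).length)

/-- Attention: flag position `i` iff it is an `x`-token whose matching `y`-token is
visible in the suffix and differs. -/
def Mg (suf : List (Option Bool)) (k : ℕ) (σ : Option Bool) (i : ℕ) : Bool :=
  decide (i ≤ (k + suf.length - 1) / 2 ∧ k ≤ (k + suf.length - 1) / 2 + i ∧
    suf[(k + suf.length - 1) / 2 + i - k]? ≠ some σ)

/-- Suffix oracle. -/
def Mh (bits : Fin 1 → Bool) (G : Finset (Option Bool × ℕ)) (suf : List (Option Bool))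
    (k : ℕ) : Bool :=
  if none ∈ suf then
    decide (G = ∅ ∧ suf.take ((k + suf.length - 1) / 2 - k)
      = suf.drop ((k + suf.length - 1) / 2 + 1))
  else bits 0 && decide (G = ∅)

def M0 : BAPO (Option Bool) Bool 1 1 := ⟨Mf, Mg, Mh⟩

lemma M0_f : M0.f = Mf := rfl
lemma M0_g : M0.g = Mg := rfl
lemma M0_h : M0.h = Mh := rfl

lemma cands_empty_iff {Sigma Out : Type} {a b : ℕ} (M : BAPO Sigma Out a b)
    (pre suf : List Sigma) :
    M.cands pre suf = ∅ ↔
      ∀ j : ℕ, ∀ hj : j < pre.length, M.g suf pre.length (pre[j]'hj) (j + 1) = false := by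
  classical
  unfold BAPO.cands
  rw [Finset.image_eq_empty, Finset.filter_eq_empty_iff]
  constructor
  · intro h j hj
    have := h (Finset.mem_univ (⟨j, hj⟩ : Fin pre.length))
    simpa [List.get_eq_getElem] using this
  · intro h i _
    simpa [List.get_eq_getElem] using h i i.isLt

lemma G_empty_iff {G C : Finset (Option Bool × ℕ)} (hsub : G ⊆ C)
    (hcard : G.card = min 1 C.card) : (G = ∅) ↔ (C = ∅) := by
  constructor
  · rintro rfl
    simp only [Finset.card_empty] at hcard
    rw [← Finset.card_eq_zero]
    omega
  · rintro rfl
    exact Finset.subset_empty.mp hsub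

lemma takeWhile_append_cons {α : Type} (p : α → Bool) (l₁ : List α) (a : α) (l₂ : List α)
    (h : ∀ b ∈ l₁, p b = true) (ha : p a = false) :
    (l₁ ++ a :: l₂).takeWhile p = l₁ := by
  induction l₁ with
  | nil => simp [List.takeWhile_cons, ha]
  | cons c l ih =>
    rw [List.cons_append, List.takeWhile_cons, h c (by simp)]
    simp [ih fun b hb => h b (by simp [hb])]

end EqBAPO

/-- **Equality is BAPO-easy.** For every `n` there is a `(1, 1)`-BAPO solving
`Equality`: on the instance `x | y` (over the alphabet `{0, 1, |}`, encoded as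
`Option Bool` with `none` the divider token), it correctly decides whether the
two `n`-bit strings `x` and `y` are equal, for every prefix–suffix split. -/
theorem equality_has_one_one_BAPO (n : ℕ) :
    ∃ M : BAPO (Option Bool) Bool 1 1,
      ∀ x y : Fin n → Bool,
        M.SolvesOn
          (List.ofFn (fun j => some (x j)) ++ [none] ++ List.ofFn (fun j => some (y j)))
          (decide (x = y)) := by
  refine ⟨EqBAPO.M0, ?_⟩
  intro x y k hk G hsub hcard
  set X : List (Option Bool) := List.ofFn (fun j => some (x j)) with hXdef
  set Y : List (Option Bool) := List.ofFn (fun j => some (y j)) with hYdef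
  have hXlen : X.length = n := by simp [hXdef]
  have hYlen : Y.length = n := by simp [hYdef]
  have hzlen : (X ++ [none] ++ Y).length = 2 * n + 1 := by
    simp only [List.length_append, List.length_cons, List.length_nil, hXlen, hYlen]; omega
  rw [hzlen] at hk
  have hN : (k + (2 * n + 1 - k) - 1) / 2 = n := by omega
  have hXget : ∀ j (hj : j < n), X[j]? = some (some (x ⟨j, hj⟩)) := by
    intro j hj
    rw [List.getElem?_eq_getElem (by rw [hXlen]; exact hj)]
    simp [hXdef]
  have hYget : ∀ j (hj : j < n), Y[j]? = some (some (y ⟨j, hj⟩)) := by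
    intro j hj
    rw [List.getElem?_eq_getElem (by rw [hYlen]; exact hj)]
    simp [hYdef]
  rw [EqBAPO.M0_f, EqBAPO.M0_h]
  rcases le_or_gt k n with hkn | hkn
  · -- k ≤ n : the divider is in the suffix
    have hpre : (X ++ [none] ++ Y).take k = X.take k := by
      rw [List.take_append_of_le_length (by simp only [List.length_append, hXlen]; omega),
          List.take_append_of_le_length (by simp only [hXlen]; omega)]
    have hsuf : (X ++ [none] ++ Y).drop k = X.drop k ++ [none] ++ Y := by
      rw [List.drop_append_of_le_length (by simp only [List.length_append, hXlen]; omega),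
          List.drop_append_of_le_length (by simp only [hXlen]; omega)]
    rw [hpre, hsuf] at hsub hcard ⊢
    have hmem : (none : Option Bool) ∈ X.drop k ++ [none] ++ Y := by simp
    have hplen : (X.take k).length = k := by
      simp only [List.length_take, hXlen]; omega
    have hs1 : (X.drop k ++ [none] ++ Y).length = 2 * n + 1 - k := by
      simp only [List.length_append, List.length_drop, List.length_cons, List.length_nil,
        hXlen, hYlen]; omega
    have hsufget : ∀ j (hj : j < n),
        (X.drop k ++ [none] ++ Y)[n + (j + 1) - k]? = some (some (y ⟨j, hj⟩)) := by
      intro j hj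
      rw [List.getElem?_append_right
        (by simp only [List.length_append, List.length_drop, List.length_cons,
              List.length_nil, hXlen]; omega)]
      have e : n + (j + 1) - k - (X.drop k ++ [none]).length = j := by
        simp only [List.length_append, List.length_drop, List.length_cons,
          List.length_nil, hXlen]; omega
      rw [e, hYget j hj]
    have hGiff : G = ∅ ↔ ∀ j, (hj : j < n) → j < k → x ⟨j, hj⟩ = y ⟨j, hj⟩ := by
      rw [EqBAPO.G_empty_iff hsub hcard, EqBAPO.cands_empty_iff]
      simp only [EqBAPO.M0_g]
      constructor
      · intro h j hj hjk
        have hj' : j < (X.take k).length := by rw [hplen]; omega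
        have hg := h j hj'
        have e1 : (X.take k)[j]'hj' = some (x ⟨j, hj⟩) := by simp [hXdef]
        simp only [EqBAPO.Mg] at hg
        rw [e1, hplen, hs1, hN] at hg
        simp only [decide_eq_false_iff_not] at hg
        have h3 : (X.drop k ++ [none] ++ Y)[n + (j + 1) - k]? = some (some (x ⟨j, hj⟩)) := by
          by_contra hne
          exact hg ⟨by omega, by omega, hne⟩
        rw [hsufget j hj] at h3
        simpa using h3.symm
      · intro h j hj'
        have hjk : j < k := hplen ▸ hj'
        have hjn : j < n := by omega
        have e1 : (X.take k)[j]'hj' = some (x ⟨j, hjn⟩) := by simp [hXdef]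
        simp only [EqBAPO.Mg]
        rw [e1, hplen, hs1, hN]
        simp only [decide_eq_false_iff_not]
        rintro ⟨h1, h2, h3⟩
        apply h3
        rw [hsufget j hjn, h j hjn hjk]
    have htake : (X.drop k ++ [none] ++ Y).take (n - k) = X.drop k := by
      rw [List.take_append_of_le_length
            (by simp only [List.length_append, List.length_drop, List.length_cons,
                  List.length_nil, hXlen]; omega),
          List.take_append_of_le_length
            (by simp only [List.length_drop, hXlen]; omega),
          List.take_of_length_le (by simp only [List.length_drop, hXlen]; omega)]
    have hdrop : (X.drop k ++ [none] ++ Y).drop (n + 1) = Y.drop k := by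
      rw [show n + 1 = (X.drop k ++ [none]).length + k from by
            simp only [List.length_append, List.length_drop, List.length_cons,
              List.length_nil, hXlen]; omega,
          List.drop_length_add_append]
    have hA : X.drop k = Y.drop k ↔ ∀ j, (hj : j < n) → k ≤ j → x ⟨j, hj⟩ = y ⟨j, hj⟩ := by
      constructor
      · intro hEq j hj hkj
        have h1 := congrArg (fun l => l[j - k]?) hEq
        simp only [List.getElem?_drop, Nat.add_sub_cancel' hkj] at h1
        rw [hXget j hj, hYget j hj] at h1
        simpa using h1
      · intro h
        apply List.ext_getElem (by simp only [List.length_drop, hXlen, hYlen])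
        intro i h1 h2
        simp only [List.getElem_drop]
        have hi : k + i < n := by
          simp only [List.length_drop, hXlen] at h1; omega
        simp only [hXdef, hYdef, List.getElem_ofFn]
        exact congrArg some (h (k + i) hi (Nat.le_add_right k i))
    simp only [EqBAPO.Mh]
    rw [if_pos hmem, hs1, hN, htake, hdrop]
    simp only [decide_eq_decide]
    rw [hGiff, hA]
    constructor
    · rintro ⟨h1, h2⟩
      funext j
      rcases Nat.lt_or_ge j.val k with hc | hc
      · exact h1 j.val j.isLt hc
      · exact h2 j.val j.isLt hc
    · intro hxy
      exact ⟨fun j hj _ => by rw [hxy], fun j hj _ => by rw [hxy]⟩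
  · -- n < k : the divider is in the prefix
    have hpre : (X ++ [none] ++ Y).take k = X ++ [none] ++ Y.take (k - (n + 1)) := by
      rw [List.take_append,
          List.take_of_length_le (by simp only [List.length_append, List.length_cons,
            List.length_nil, hXlen]; omega)]
      congr 1
      simp only [List.length_append, List.length_cons, List.length_nil, hXlen]
    have hsuf : (X ++ [none] ++ Y).drop k = Y.drop (k - (n + 1)) := by
      rw [List.drop_append,
          List.drop_eq_nil_of_le (by simp only [List.length_append, List.length_cons,
            List.length_nil, hXlen]; omega)]
      simp only [List.nil_append, List.length_append, List.length_cons,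
        List.length_nil, hXlen]
    rw [hpre, hsuf] at hsub hcard ⊢
    have hnomem : (none : Option Bool) ∉ Y.drop (k - (n + 1)) := by
      intro hm
      have := List.drop_subset _ _ hm
      simp [hYdef, List.mem_ofFn] at this
    have hs1 : (Y.drop (k - (n + 1))).length = 2 * n + 1 - k := by
      simp only [List.length_drop, hYlen]; omega
    have hplen : (X ++ [none] ++ Y.take (k - (n + 1))).length = k := by
      simp only [List.length_append, List.length_cons, List.length_nil,
        List.length_take, hXlen, hYlen]; omega
    have e1 : ∀ j (hj : j < n) (hj' : j < (X ++ [none] ++ Y.take (k - (n + 1))).length),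
        (X ++ [none] ++ Y.take (k - (n + 1)))[j]'hj' = some (x ⟨j, hj⟩) := by
      intro j hj hj'
      have hXn1 : (X ++ [none]).length = n + 1 := by simp [hXlen]
      have q : (X ++ [none] ++ Y.take (k - (n + 1)))[j]? = some (some (x ⟨j, hj⟩)) := by
        rw [List.getElem?_append_left (by rw [hXn1]; omega),
            List.getElem?_append_left (by rw [hXlen]; omega)]
        exact hXget j hj
      rw [List.getElem?_eq_getElem hj'] at q
      exact Option.some.inj q
    have e2 : ∀ j (hj : j < n), k - (n + 1) ≤ j →
        (Y.drop (k - (n + 1)))[n + (j + 1) - k]? = some (some (y ⟨j, hj⟩)) := by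
      intro j hj hjt
      rw [List.getElem?_drop, show k - (n + 1) + (n + (j + 1) - k) = j from by omega,
        hYget j hj]
    have hMf : EqBAPO.Mf (X ++ [none] ++ Y.take (k - (n + 1))) 0
        = decide (Y.take (k - (n + 1)) <+: X) := by
      have htw : ((X ++ [none] ++ Y.take (k - (n + 1))).takeWhile Option.isSome).length
          = n := by
        rw [show X ++ [none] ++ Y.take (k - (n + 1))
              = X ++ (none :: Y.take (k - (n + 1))) from by simp]
        rw [EqBAPO.takeWhile_append_cons _ _ _ _
          (by intro b hb; simp only [hXdef, List.mem_ofFn, Set.mem_range] at hb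
              obtain ⟨i, rfl⟩ := hb; rfl) rfl]
        exact hXlen
      have ed : (X ++ [none] ++ Y.take (k - (n + 1))).drop (n + 1)
          = Y.take (k - (n + 1)) := by
        rw [show n + 1 = (X ++ [none]).length + 0 from by
              simp only [List.length_append, List.length_cons, List.length_nil, hXlen],
            List.drop_append]
        simp
      have et : (X ++ [none] ++ Y.take (k - (n + 1))).take n = X := by
        rw [List.take_append_of_le_length (by simp only [List.length_append,
              List.length_cons, List.length_nil, hXlen]; omega),
            List.take_append_of_le_length (by simp only [hXlen]; omega),
            List.take_of_length_le (by simp only [hXlen]; omega)]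
      simp only [EqBAPO.Mf, htw, ed, et]
    have hMfiff : (Y.take (k - (n + 1)) <+: X)
        ↔ ∀ j, (hj : j < n) → j < k - (n + 1) → x ⟨j, hj⟩ = y ⟨j, hj⟩ := by
      rw [List.prefix_iff_eq_take,
        show (Y.take (k - (n + 1))).length = k - (n + 1) from by
          simp only [List.length_take, hYlen]; omega]
      constructor
      · intro hEq j hj hjt
        have h1 := congrArg (fun l => l[j]?) hEq
        simp only [List.getElem?_take_of_lt hjt] at h1
        rw [hXget j hj, hYget j hj] at h1
        simpa using h1.symm
      · intro h
        apply List.ext_getElem (by simp only [List.length_take, hXlen, hYlen])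
        intro i h1 h2
        have hi : i < n := by simp only [List.length_take, hYlen] at h1; omega
        have hit : i < k - (n + 1) := by simp only [List.length_take, hYlen] at h1; omega
        simp only [List.getElem_take, hXdef, hYdef, List.getElem_ofFn]
        exact congrArg some (h i hi hit).symm
    have hGiff : G = ∅ ↔ ∀ j, (hj : j < n) → k - (n + 1) ≤ j → x ⟨j, hj⟩ = y ⟨j, hj⟩ := by
      rw [EqBAPO.G_empty_iff hsub hcard, EqBAPO.cands_empty_iff]
      simp only [EqBAPO.M0_g]
      constructor
      · intro h j hj hjt
        have hj' : j < (X ++ [none] ++ Y.take (k - (n + 1))).length := by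
          rw [hplen]; omega
        have hg := h j hj'
        simp only [EqBAPO.Mg] at hg
        rw [e1 j hj hj', hplen, hs1, hN] at hg
        simp only [decide_eq_false_iff_not] at hg
        have h3 : (Y.drop (k - (n + 1)))[n + (j + 1) - k]? = some (some (x ⟨j, hj⟩)) := by
          by_contra hne
          exact hg ⟨by omega, by omega, hne⟩
        rw [e2 j hj hjt] at h3
        simpa using h3.symm
      · intro h j hj'
        simp only [EqBAPO.Mg]
        rw [hplen, hs1, hN]
        simp only [decide_eq_false_iff_not]
        rintro ⟨h1, h2, h3⟩
        have hj : j < n := by omega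
        have hjt : k - (n + 1) ≤ j := by omega
        apply h3
        rw [e2 j hj hjt, e1 j hj hj', h j hj hjt]
    simp only [EqBAPO.Mh]
    rw [if_neg hnomem, hMf, ← Bool.decide_and]
    simp only [decide_eq_decide]
    rw [hMfiff, hGiff]
    constructor
    · rintro ⟨h1, h2⟩
      funext j
      rcases Nat.lt_or_ge j.val (k - (n + 1)) with hc | hc
      · exact h1 j.val j.isLt hc
      · exact h2 j.val j.isLt hc
    · intro hxy
      exact ⟨fun j hj _ => by rw [hxy], fun j hj _ => by rw [hxy]⟩
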